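/- For all b > 1, the function x^*(β_c) = (β_c - b + sqrt((β_c + b)^2 - 4β_c))/(2β_c) is strictly increasing in β_c on (0, ∞); equivalently, its derivative equals (β_c(β_c + b - 2) + b·sqrt(Δ) - Δ)/(2 sqrt(Δ) β_c^2) and is positive. -/

import Mathlib

/-- For all `b > 1`, the function `x^*(βc) = (βc - b + sqrt((βc + b)^2 - 4βc))/(2βc)`
is strictly increasing in `βc` on `(0, ∞)`; equivalently, its derivative equals
`(βc(βc + b - 2) + b·sqrt Δ - Δ)/(2 sqrt Δ βc^2)` and is positive. -/
theorem stmt5 (b : ℝ) (hb : 1 < b) :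
    StrictMonoOn (fun βc : ℝ => (βc - b + Real.sqrt ((βc + b) ^ 2 - 4 * βc)) / (2 * βc))
      (Set.Ioi 0) ∧
    ∀ βc : ℝ, 0 < βc →
      HasDerivAt (fun βc : ℝ => (βc - b + Real.sqrt ((βc + b) ^ 2 - 4 * βc)) / (2 * βc))
        ((βc * (βc + b - 2) + b * Real.sqrt ((βc + b) ^ 2 - 4 * βc) -
            ((βc + b) ^ 2 - 4 * βc)) /
          (2 * Real.sqrt ((βc + b) ^ 2 - 4 * βc) * βc ^ 2)) βc ∧
      0 < (βc * (βc + b - 2) + b * Real.sqrt ((βc + b) ^ 2 - 4 * βc) -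
            ((βc + b) ^ 2 - 4 * βc)) /
          (2 * Real.sqrt ((βc + b) ^ 2 - 4 * βc) * βc ^ 2) := by
  have key : ∀ x : ℝ, 0 < x →
      HasDerivAt (fun βc : ℝ => (βc - b + Real.sqrt ((βc + b) ^ 2 - 4 * βc)) / (2 * βc))
        ((x * (x + b - 2) + b * Real.sqrt ((x + b) ^ 2 - 4 * x) -
            ((x + b) ^ 2 - 4 * x)) /
          (2 * Real.sqrt ((x + b) ^ 2 - 4 * x) * x ^ 2)) x ∧
      0 < (x * (x + b - 2) + b * Real.sqrt ((x + b) ^ 2 - 4 * x) -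
            ((x + b) ^ 2 - 4 * x)) /
          (2 * Real.sqrt ((x + b) ^ 2 - 4 * x) * x ^ 2) := by
    intro x hx
    have hΔpos : 0 < (x + b) ^ 2 - 4 * x := by nlinarith [sq_nonneg (x + b - 2)]
    set s := Real.sqrt ((x + b) ^ 2 - 4 * x) with hsdef
    have hs : s ^ 2 = (x + b) ^ 2 - 4 * x := Real.sq_sqrt hΔpos.le
    have hs0 : 0 < s := Real.sqrt_pos.mpr hΔpos
    have hg : HasDerivAt (fun y : ℝ => (y + b) ^ 2 - 4 * y) (2 * (x + b) - 4) x := by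
      have h1 := (((hasDerivAt_id x).add_const b).pow 2).sub ((hasDerivAt_id x).const_mul 4)
      exact h1.congr_deriv (by simp)
    have hsq : HasDerivAt (fun y : ℝ => Real.sqrt ((y + b) ^ 2 - 4 * y))
        ((2 * (x + b) - 4) / (2 * s)) x := hg.sqrt hΔpos.ne'
    have hnum : HasDerivAt (fun y : ℝ => y - b + Real.sqrt ((y + b) ^ 2 - 4 * y))
        (1 + (2 * (x + b) - 4) / (2 * s)) x := ((hasDerivAt_id x).sub_const b).add hsq
    have hden : HasDerivAt (fun y : ℝ => 2 * y) 2 x := by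
      simpa using (hasDerivAt_id x).const_mul 2
    have hdiv := hnum.div hden (by positivity : (2 : ℝ) * x ≠ 0)
    constructor
    · refine hdiv.congr_deriv ?_; symm
      have hx' : x ≠ 0 := hx.ne'
      rw [← hsdef]
      field_simp
      linear_combination 2 * hs
    · have hN : 0 < x * (x + b - 2) + b * s - ((x + b) ^ 2 - 4 * x) := by
        have hR : x * b + b ^ 2 - 2 * x < b * s := by
          have h2 : (x * b + b ^ 2 - 2 * x) ^ 2 < (b * s) ^ 2 := by
            nlinarith [hs, mul_pos (mul_pos hx hx) (sub_pos.mpr hb)]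
          exact lt_of_pow_lt_pow_left₀ 2 (by positivity) h2
        nlinarith [hR]
      have hD : 0 < 2 * s * x ^ 2 := by positivity
      exact div_pos hN hD
  refine ⟨?_, key⟩
  apply strictMonoOn_of_deriv_pos (convex_Ioi 0)
  · intro x hx
    exact ((key x hx).1.continuousAt).continuousWithinAt
  · intro x hx
    rw [interior_Ioi] at hx
    rw [(key x hx).1.deriv]
    exact (key x hx).2
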